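/- For the Pareto distribution with α > 1, the tail probabilities along the value sequence satisfy n·h(v_n) → (α-1)/α as n → ∞, where v_{n+1} = v_n + β^α v_n^{1-α}/(α-1) with v_0 ≥ β and h(y) = (β/y)^α. -/

import Mathlib

open Filter Real

/-- For the Pareto distribution with `α > 1`, `β > 0`, along the value recurrence
`v_{n+1} = v_n + β^α v_n^{1-α}/(α-1)` with `v_0 ≥ β`, the tail probabilities satisfy
`n (β/v_n)^α → (α-1)/α`. -/
theorem stmt_14 (α β : ℝ) (hα : 1 < α) (hβ : 0 < β) (v : ℕ → ℝ) (hv0 : β ≤ v 0)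
    (hrec : ∀ n, v (n + 1) = v n + β ^ α * (v n) ^ (1 - α) / (α - 1)) :
    Tendsto (fun n : ℕ => (n : ℝ) * (β / v n) ^ α) atTop (nhds ((α - 1) / α)) := by
  have hα1 : (0:ℝ) < α - 1 := by linarith
  have hα0 : (0:ℝ) < α := by linarith
  set c : ℝ := β ^ α / (α - 1) with hc_def
  have hβα : (0:ℝ) < β ^ α := rpow_pos_of_pos hβ α
  have hc : 0 < c := div_pos hβα hα1
  -- positivity of v
  have hvβ : ∀ n, β ≤ v n := by
    intro n
    induction n with
    | zero => exact hv0
    | succ n ih =>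
      have hvpos : 0 < v n := lt_of_lt_of_le hβ ih
      have h1 : 0 ≤ β ^ α * v n ^ (1 - α) / (α - 1) := by positivity
      rw [hrec]; linarith
  have hvpos : ∀ n, 0 < v n := fun n => lt_of_lt_of_le hβ (hvβ n)
  set a : ℕ → ℝ := fun n => v n ^ α with ha_def
  have hapos : ∀ n, 0 < a n := fun n => rpow_pos_of_pos (hvpos n) α
  set t : ℕ → ℝ := fun n => c * v n ^ (-α) with ht_def
  have htpos : ∀ n, 0 < t n := fun n => mul_pos hc (rpow_pos_of_pos (hvpos n) _)
  have hat : ∀ n, a n * t n = c := by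
    intro n
    have h1 : v n ^ α * v n ^ (-α) = 1 := by
      rw [← rpow_add (hvpos n)]; simp
    calc a n * t n = c * (v n ^ α * v n ^ (-α)) := by simp only [ha_def, ht_def]; ring
      _ = c := by rw [h1, mul_one]
  -- v(n+1) = v n * (1 + t n)
  have hfac : ∀ n, v (n + 1) = v n * (1 + t n) := by
    intro n
    rw [hrec]
    have h1 : v n ^ (1 - α) = v n * v n ^ (-α) := by
      rw [← rpow_one_add' (le_of_lt (hvpos n)) (by ring_nf; linarith : (1:ℝ) + -α ≠ 0)]
      ring_nf
    rw [h1]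
    simp only [ht_def, hc_def]
    ring
  -- a(n+1) = a n * (1 + t n)^α
  have hafac : ∀ n, a (n + 1) = a n * (1 + t n) ^ α := by
    intro n
    simp only [ha_def, hfac n]
    rw [mul_rpow (le_of_lt (hvpos n)) (by linarith [htpos n])]
  -- lower bound via Bernoulli
  have hlow : ∀ n, a n + α * c ≤ a (n + 1) := by
    intro n
    rw [hafac n]
    have hb : 1 + α * t n ≤ (1 + t n) ^ α :=
      one_add_mul_self_le_rpow_one_add (by linarith [htpos n]) (le_of_lt hα)
    have h2 : a n * (1 + α * t n) ≤ a n * (1 + t n) ^ α :=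
      mul_le_mul_of_nonneg_left hb (le_of_lt (hapos n))
    have h3 : a n * (1 + α * t n) = a n + α * c := by
      rw [← hat n]; ring
    linarith
  have hlin : ∀ n : ℕ, a 0 + n * (α * c) ≤ a n := by
    intro n
    induction n with
    | zero => simp
    | succ n ih =>
      have := hlow n
      push_cast
      push_cast at ih
      linarith
  -- a → ∞
  have ha_top : Tendsto a atTop atTop := by
    apply tendsto_atTop_mono hlin
    apply tendsto_atTop_add_const_left
    exact Tendsto.atTop_mul_const (mul_pos hα0 hc) tendsto_natCast_atTop_atTop
  -- v → ∞
  have hv_top : Tendsto v atTop atTop := by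
    have h1 : Tendsto (fun n => a n ^ α⁻¹) atTop atTop :=
      (tendsto_rpow_atTop (inv_pos.mpr hα0)).comp ha_top
    refine h1.congr fun n => ?_
    simp only [ha_def]
    rw [← rpow_mul (hvpos n).le, mul_inv_cancel₀ (ne_of_gt hα0), rpow_one]
  -- t → 0
  have ht0 : Tendsto t atTop (nhds 0) := by
    have h1 : Tendsto (fun n => v n ^ (-α)) atTop (nhds 0) :=
      (tendsto_rpow_neg_atTop hα0).comp hv_top
    have h2 := h1.const_mul c
    simpa using h2
  -- slope of (1+x)^α at 0
  have hf : HasDerivAt (fun x : ℝ => (1 + x) ^ α) α 0 := by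
    have h1 : HasDerivAt (fun x : ℝ => 1 + x) 1 0 := (hasDerivAt_id 0).const_add 1
    have h2 : HasDerivAt (fun y : ℝ => y ^ α) (α * (1:ℝ) ^ (α - 1)) ((fun x : ℝ => 1 + x) 0) := by
      simpa using Real.hasDerivAt_rpow_const (x := (1:ℝ)) (p := α) (Or.inl one_ne_zero)
    have h3 := h2.comp 0 h1
    have h4 : α * (1:ℝ) ^ (α - 1) * 1 = α := by simp
    rw [h4] at h3
    exact h3
  have hslope : Tendsto (slope (fun x : ℝ => (1 + x) ^ α) 0) (nhdsWithin 0 {(0:ℝ)}ᶜ) (nhds α) :=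
    hasDerivAt_iff_tendsto_slope.mp hf
  have ht0' : Tendsto t atTop (nhdsWithin 0 {(0:ℝ)}ᶜ) :=
    tendsto_nhdsWithin_of_tendsto_nhds_of_eventually_within _ ht0
      (Eventually.of_forall fun n => ne_of_gt (htpos n))
  -- increments tend to c * α
  have hd : Tendsto (fun n => a (n + 1) - a n) atTop (nhds (c * α)) := by
    have h1 := (hslope.comp ht0').const_mul c
    refine h1.congr fun n => ?_
    simp only [Function.comp_apply, slope_def_field]
    rw [hafac n]
    have htne := ne_of_gt (htpos n)
    have han : a n = c / t n := by
      rw [eq_div_iff htne]; exact hat n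
    rw [han]
    field_simp
    rw [add_zero, one_rpow]; ring
  -- Cesàro
  have hces := hd.cesaro
  have hces2 : Tendsto (fun n : ℕ => (n : ℝ)⁻¹ * (a n - a 0)) atTop (nhds (c * α)) := by
    refine hces.congr fun n => ?_
    rw [Finset.sum_range_sub a n]
  have hinv0 : Tendsto (fun n : ℕ => (n : ℝ)⁻¹ * a 0) atTop (nhds 0) := by
    simpa using tendsto_inv_atTop_nhds_zero_nat.mul_const (a 0)
  have hces3 : Tendsto (fun n : ℕ => (n : ℝ)⁻¹ * a n) atTop (nhds (c * α)) := by
    have := hces2.add hinv0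
    simp only [add_zero] at this
    refine this.congr fun n => ?_
    ring
  -- conclude
  have hcα : c * α ≠ 0 := ne_of_gt (mul_pos hc hα0)
  have hfin : Tendsto (fun n : ℕ => β ^ α / ((n : ℝ)⁻¹ * a n)) atTop
      (nhds (β ^ α / (c * α))) := tendsto_const_nhds.div hces3 hcα
  have hval : β ^ α / (c * α) = (α - 1) / α := by
    rw [hc_def]
    field_simp
  rw [← hval]
  refine hfin.congr' ?_
  filter_upwards [eventually_ge_atTop 1] with n hn
  have hn0 : (n : ℝ) ≠ 0 := Nat.cast_ne_zero.mpr (by omega)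
  have hane : a n ≠ 0 := ne_of_gt (hapos n)
  rw [div_rpow hβ.le (hvpos n).le]
  show β ^ α / ((n : ℝ)⁻¹ * a n) = n * (β ^ α / a n)
  field_simp
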